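/- Let A be a binary matrix with n columns and exactly p ones, and let C_1,...,C_q be nonempty sets of columns such that some permutation makes each C_k consecutive. Define the penalized distance D(c_i,c_j) = d_h(c_i,c_j) + (2p+1)·Σ_{k=1}^q |1_{C_k}(c_i) − 1_{C_k}(c_j)| on the columns of A' (A with a zero column appended). Then any minimum-length tour of the columns of A' under D, read as a column permutation π of A starting after the zero column, makes every C_k consecutive in π(A), and among all permutations making every C_k consecutive, π minimizes cons1(π(A)). -/

import Mathlib

open Finset
open Fin.NatCast

/-- Extend a row of length `n` by zeros to an `ℕ`-indexed row. -/
def rowExt (n : ℕ) (r : Fin n → Bool) : ℕ → Bool :=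
  fun j => if h : j < n then r ⟨j, h⟩ else false

/-- The number of maximal blocks of consecutive ones in a row. -/
def cons1Row (n : ℕ) (r : Fin n → Bool) : ℕ :=
  ((Finset.range n).filter
    (fun j => rowExt n r j = true ∧ (j = 0 ∨ rowExt n r (j - 1) = false))).card

/-- The total number of maximal blocks of consecutive ones in a binary matrix. -/
def cons1 {m n : ℕ} (A : Fin m → Fin n → Bool) : ℕ :=
  ∑ i, cons1Row n (A i)

/-- Append a column of zeros to the right of a binary matrix. -/
def appendZero {m n : ℕ} (A : Fin m → Fin n → Bool) : Fin m → Fin (n + 1) → Bool :=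
  fun i j => if h : (j : ℕ) < n then A i ⟨j, h⟩ else false

/-- Hamming distance between two columns of a binary matrix. -/
def colHam {m N : ℕ} (B : Fin m → Fin N → Bool) (a b : Fin N) : ℕ :=
  hammingDist (fun i => B i a) (fun i => B i b)

/-- The set of columns C occupies a contiguous interval of positions in π(A). -/
def consecIn {n : ℕ} (π : Equiv.Perm (Fin n)) (C : Finset (Fin n)) : Prop :=
  ∃ a : ℕ, ∀ j : Fin n, π j ∈ C ↔ a ≤ (j : ℕ) ∧ (j : ℕ) < a + C.card

/-- The penalized distance on the columns of A' (A with a zero column appended):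
Hamming distance plus (2p+1) times the number of sets C_k in which exactly one of the
two columns lies. -/
def pDist {m n : ℕ} (A : Fin m → Fin n → Bool) (p q : ℕ) (C : Fin q → Finset (Fin n))
    (a b : Fin (n + 1)) : ℕ :=
  colHam (appendZero A) a b +
    (2 * p + 1) *
      ∑ k, (if (a ∈ (C k).image Fin.castSucc ↔ b ∈ (C k).image Fin.castSucc) then 0 else 1)

/-- a minimum-length tour under the penalized distance, read as a column
permutation π after the zero column, makes every C_k consecutive, and among all such
permutations it minimizes cons1. -/
lemma seq_lemma (b : ℕ → Bool) (hb : b 0 = false) (N : ℕ) :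
    (∑ j ∈ Finset.range N, (if b j = b (j+1) then 0 else 1)) + (if b N = true then 1 else 0)
      = 2 * ((Finset.range N).filter (fun j => b (j+1) = true ∧ b j = false)).card := by
  induction N with
  | zero => simp [hb]
  | succ N ih =>
    rw [Finset.sum_range_succ, Finset.range_add_one, Finset.filter_insert]
    cases h1 : b N <;> cases h2 : b (N+1) <;>
      simp [h1, h2, Finset.card_insert_of_notMem, Finset.notMem_range_self] at ih ⊢ <;>
      omega

lemma cyclic_lemma (n : ℕ) (g : Fin (n+1) → Bool) (h0 : g 0 = false)
    (r : Fin n → Bool) (hr : ∀ j : Fin n, r j = g (((j : ℕ)+1 : ℕ))) :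
    (∑ k : Fin (n+1), if g k = g (k+1) then 0 else 1) = 2 * cons1Row n r := by
  set b : ℕ → Bool := fun j => g (j : Fin (n+1)) with hbdef
  have hb0 : b 0 = false := by simp [hbdef, h0]
  have hstep : (∑ k : Fin (n+1), if g k = g (k+1) then 0 else 1)
      = ∑ j ∈ Finset.range (n+1), (if b j = b (j+1) then 0 else 1) := by
    rw [← Fin.sum_univ_eq_sum_range (fun j => if b j = b (j+1) then 0 else 1) (n+1)]
    refine Finset.sum_congr rfl (fun k _ => ?_)
    have h1 : ((k : ℕ) : Fin (n+1)) = k := Fin.cast_val_eq_self k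
    have h2 : (((k : ℕ) + 1 : ℕ) : Fin (n+1)) = k + 1 := by push_cast [h1]; ring
    simp only [hbdef, h1, h2]
  have hbN : b (n+1) = false := by
    have : ((n+1 : ℕ) : Fin (n+1)) = 0 := by simp
    simp [hbdef, this, h0]
  rw [hstep]
  have := seq_lemma b hb0 (n+1)
  rw [hbN] at this
  simp only [if_neg (by simp : ¬ (false = true))] at this
  rw [Nat.add_zero] at this
  rw [this]
  rw [Finset.range_add_one, Finset.filter_insert, if_neg (by simp [hbN])]
  unfold cons1Row
  have hfeq : (Finset.range n).filter (fun j => b (j+1) = true ∧ b j = false)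
      = (Finset.range n).filter
          (fun j => rowExt n r j = true ∧ (j = 0 ∨ rowExt n r (j - 1) = false)) := by
    apply Finset.filter_congr
    intro j hj
    rw [Finset.mem_range] at hj
    have hre : rowExt n r j = b (j+1) := by
      rw [rowExt, dif_pos hj, hr ⟨j, hj⟩]
    have hre' : 0 < j → rowExt n r (j-1) = b j := by
      intro hpos
      rw [rowExt, dif_pos (by omega : j - 1 < n), hr ⟨j-1, by omega⟩]
      simp only [Fin.val_mk]
      have hj1 : (j - 1) + 1 = j := by omega
      rw [hj1]
    constructor
    · rintro ⟨h1, h2⟩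
      refine ⟨by rw [hre]; exact h1, ?_⟩
      rcases Nat.eq_zero_or_pos j with h | h
      · exact Or.inl h
      · exact Or.inr (by rw [hre' h]; exact h2)
    · rintro ⟨h1, h2⟩
      refine ⟨by rw [hre] at h1; exact h1, ?_⟩
      rcases Nat.eq_zero_or_pos j with h0' | h0'
      · subst h0'; exact hb0
      · rcases h2 with h | h
        · omega
        · rw [hre' h0'] at h; exact h
  rw [hfeq]

lemma rowExt_coe (n : ℕ) (d : Fin n → Bool) (j : Fin n) : rowExt n d j = d j := by
  rw [rowExt, dif_pos j.isLt, Fin.eta]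

lemma blocks_pos (n : ℕ) (d : Fin n → Bool) (hne : ∃ j, d j = true) :
    1 ≤ cons1Row n d := by
  obtain ⟨j, hj⟩ := hne
  have hP : ∃ t, rowExt n d t = true := ⟨j, by rw [rowExt_coe]; exact hj⟩
  set ℓ := Nat.find hP with hℓ
  have hℓle : ℓ ≤ (j : ℕ) := Nat.find_min' hP (by rw [rowExt_coe]; exact hj)
  have hℓn : ℓ < n := lt_of_le_of_lt hℓle j.isLt
  have hmem : ℓ ∈ (Finset.range n).filter
      (fun t => rowExt n d t = true ∧ (t = 0 ∨ rowExt n d (t - 1) = false)) := by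
    rw [Finset.mem_filter, Finset.mem_range]
    refine ⟨hℓn, Nat.find_spec hP, ?_⟩
    rcases Nat.eq_zero_or_pos ℓ with h | h
    · exact Or.inl h
    · right
      have := Nat.find_min hP (show ℓ - 1 < ℓ by omega)
      simpa using this
  exact Finset.card_pos.mpr ⟨ℓ, hmem⟩

lemma card_trues (n : ℕ) (d : Fin n → Bool) :
    ((Finset.range n).filter (fun t => rowExt n d t = true)).card
      = (Finset.univ.filter (fun j => d j = true)).card := by
  rw [Finset.card_filter, Finset.card_filter,
    ← Fin.sum_univ_eq_sum_range (fun t => if rowExt n d t = true then 1 else 0) n]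
  exact Finset.sum_congr rfl (fun j _ => by rw [rowExt_coe])

lemma cons1Row_le (n : ℕ) (r : Fin n → Bool) :
    cons1Row n r ≤ (Finset.univ.filter (fun j => r j = true)).card := by
  rw [← card_trues]
  apply Finset.card_le_card
  intro t ht
  rw [Finset.mem_filter] at ht ⊢
  exact ⟨ht.1, ht.2.1⟩

lemma blocks_one_iff (n : ℕ) (d : Fin n → Bool) (hne : ∃ j, d j = true) :
    cons1Row n d = 1 ↔
      ∃ a : ℕ, ∀ j : Fin n, d j = true ↔
        a ≤ (j : ℕ) ∧ (j : ℕ) < a + (Finset.univ.filter (fun j => d j = true)).card := by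
  set b := rowExt n d with hbdef
  have hbn : ∀ t, b t = true → t < n := by
    intro t ht
    by_contra hc
    rw [hbdef, rowExt, dif_neg hc] at ht
    exact Bool.false_ne_true ht
  set M := (Finset.univ.filter (fun j => d j = true)).card with hM
  have hMN : ((Finset.range n).filter (fun t => b t = true)).card = M := card_trues n d
  constructor
  · intro h1
    obtain ⟨a, ha⟩ := Finset.card_eq_one.mp h1
    have hamem : a ∈ (Finset.range n).filter
        (fun t => rowExt n d t = true ∧ (t = 0 ∨ rowExt n d (t - 1) = false)) := by
      rw [ha]; exact Finset.mem_singleton_self a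
    rw [Finset.mem_filter, Finset.mem_range] at hamem
    obtain ⟨han, hab, hastart⟩ := hamem
    have honly : ∀ t, t ∈ (Finset.range n).filter
        (fun t => rowExt n d t = true ∧ (t = 0 ∨ rowExt n d (t - 1) = false)) → t = a := by
      intro t ht; rw [ha] at ht; exact Finset.mem_singleton.mp ht
    have hminstart : ∀ t, b t = true → a ≤ t := by
      intro t ht
      have htn : t < n := hbn t ht
      have hP : ∃ s, b s = true := ⟨t, ht⟩
      have hle : Nat.find hP ≤ t := Nat.find_min' hP ht
      have : Nat.find hP = a := by
        apply honly
        rw [Finset.mem_filter, Finset.mem_range]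
        refine ⟨by omega, Nat.find_spec hP, ?_⟩
        rcases Nat.eq_zero_or_pos (Nat.find hP) with h | h
        · exact Or.inl h
        · right
          have := Nat.find_min hP (show Nat.find hP - 1 < Nat.find hP by omega)
          simpa using this
      omega
    have hconvex : ∀ x y z, b x = true → b y = true → x ≤ z → z ≤ y → b z = true := by
      intro x y z hx hy hxz hzy
      by_contra hz
      rw [Bool.not_eq_true] at hz
      have hyn : y < n := hbn y hy
      have hzy' : z < y := lt_of_le_of_ne hzy (by rintro rfl; exact absurd hy (by simp [hz]))
      have hQ : ∃ s, z < s ∧ b s = true := ⟨y, hzy', hy⟩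
      set t := Nat.find hQ with htdef
      obtain ⟨hzt, hbt⟩ := Nat.find_spec hQ
      have hty : t ≤ y := Nat.find_min' hQ ⟨hzy', hy⟩
      have hta : t = a := by
        apply honly
        rw [Finset.mem_filter, Finset.mem_range]
        refine ⟨by omega, hbt, Or.inr ?_⟩
        rcases eq_or_lt_of_le (show z ≤ t - 1 by omega) with h | h
        · rw [← h]; exact hz
        · have := Nat.find_min hQ (show t - 1 < t by omega)
          simp only [not_and, Bool.not_eq_true] at this
          exact this h
      have := hminstart x hx
      omega
    have haN : a ∈ (Finset.range n).filter (fun t => b t = true) := by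
      rw [Finset.mem_filter, Finset.mem_range]; exact ⟨han, hab⟩
    set NN := (Finset.range n).filter (fun t => b t = true) with hNN
    have hNNne : NN.Nonempty := ⟨a, haN⟩
    set mx := NN.max' hNNne with hmx
    have hmxmem := NN.max'_mem hNNne
    have hmxprop : mx < n ∧ b mx = true := by
      have h := Finset.mem_filter.mp hmxmem
      exact ⟨Finset.mem_range.mp h.1, h.2⟩
    have hNIcc : NN = Finset.Icc a mx := by
      ext t
      rw [hNN, Finset.mem_filter, Finset.mem_range, Finset.mem_Icc]
      constructor
      · rintro ⟨htn, hbt⟩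
        exact ⟨hminstart t hbt, Finset.le_max' NN t (by rw [hNN, Finset.mem_filter, Finset.mem_range]; exact ⟨htn, hbt⟩)⟩
      · rintro ⟨h1, h2⟩
        exact ⟨by omega, hconvex a mx t hab hmxprop.2 h1 h2⟩
    have hamx : a ≤ mx := Finset.le_max' NN a haN
    have hMval : M = mx + 1 - a := by
      have h2 : NN.card = (Finset.Icc a mx).card := by rw [hNIcc]
      rw [Nat.card_Icc] at h2
      omega
    refine ⟨a, fun j => ?_⟩
    have hjb : d j = b (j : ℕ) := (rowExt_coe n d j).symm
    have hjN : d j = true ↔ (j : ℕ) ∈ NN := by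
      rw [hjb, hNN, Finset.mem_filter, Finset.mem_range]
      exact ⟨fun h => ⟨j.isLt, h⟩, fun h => h.2⟩
    rw [hjN, hNIcc, Finset.mem_Icc]
    omega
  · rintro ⟨a, ha⟩
    obtain ⟨j₀, hj₀⟩ := hne
    have hj₀' := (ha j₀).mp hj₀
    have hMpos : 1 ≤ M := by omega
    have han : a < n := lt_of_le_of_lt hj₀'.1 j₀.isLt
    have : (Finset.range n).filter
        (fun t => rowExt n d t = true ∧ (t = 0 ∨ rowExt n d (t - 1) = false)) = {a} := by
      ext t
      rw [Finset.mem_filter, Finset.mem_range, Finset.mem_singleton]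
      constructor
      · rintro ⟨htn, hbt, hstart⟩
        have htprop := (ha ⟨t, htn⟩).mp (by rw [← rowExt_coe n d ⟨t, htn⟩]; exact hbt)
        simp only [Fin.val_mk] at htprop
        by_contra hta
        have hat : a < t := by omega
        have ht1 : t - 1 < n := by omega
        have hd1 : d ⟨t - 1, ht1⟩ = true := by
          apply (ha ⟨t - 1, ht1⟩).mpr
          simp only [Fin.val_mk]
          omega
        rcases hstart with h | h
        · omega
        · rw [← rowExt_coe n d ⟨t - 1, ht1⟩] at hd1
          simp only [Fin.val_mk] at hd1 h
          rw [h] at hd1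
          exact Bool.false_ne_true hd1
      · intro hta
        have hba : d ⟨a, han⟩ = true := by
          apply (ha ⟨a, han⟩).mpr
          simp only [Fin.val_mk]
          omega
        subst hta
        refine ⟨han, by rw [← rowExt_coe n d ⟨t, han⟩] at hba; exact hba, ?_⟩
        rcases Nat.eq_zero_or_pos t with h | h
        · exact Or.inl h
        · right
          have ha1 : t - 1 < n := by omega
          have hfa : d ⟨t - 1, ha1⟩ = false := by
            rw [← Bool.not_eq_true]
            intro hcon
            have := (ha ⟨t - 1, ha1⟩).mp hcon
            simp only [Fin.val_mk] at this
            omega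
          rw [← rowExt_coe n d ⟨t - 1, ha1⟩] at hfa
          simpa using hfa
    rw [cons1Row, this, Finset.card_singleton]

lemma card_perm_mem (n : ℕ) (π : Equiv.Perm (Fin n)) (S : Finset (Fin n)) :
    (Finset.univ.filter (fun j => decide (π j ∈ S) = true)).card = S.card := by
  have h1 : (Finset.univ.filter (fun j => decide (π j ∈ S) = true))
      = Finset.univ.filter (fun j => π j ∈ S) := by simp
  rw [h1, Finset.card_filter,
    Equiv.sum_comp π (fun j => if j ∈ S then 1 else 0), Finset.sum_ite_mem,
    Finset.univ_inter, Finset.sum_const, smul_eq_mul, mul_one]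

lemma blocks_one_iff_consec (n : ℕ) (π : Equiv.Perm (Fin n)) (S : Finset (Fin n))
    (hS : S.Nonempty) :
    cons1Row n (fun j => decide (π j ∈ S)) = 1 ↔ consecIn π S := by
  obtain ⟨x, hx⟩ := hS
  have hne : ∃ j, decide (π j ∈ S) = true := ⟨π.symm x, by simp [hx]⟩
  rw [blocks_one_iff n _ hne]
  unfold consecIn
  rw [card_perm_mem n π S]
  simp only [decide_eq_true_eq]

lemma exists_tour (n : ℕ) (k₀ : Fin (n+1)) (π' : Equiv.Perm (Fin n)) :
    ∃ σ' : Equiv.Perm (Fin (n+1)), σ' k₀ = Fin.last n ∧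
      ∀ j : Fin n, ((σ' (k₀ + ((((j : ℕ) + 1 : ℕ)) : Fin (n + 1)))) : ℕ) = (π' j : ℕ) := by
  classical
  set h : Fin (n+1) → Fin (n+1) :=
    fun t => Fin.cases (Fin.last n) (fun j => Fin.castSucc (π' j)) t with hh
  have hinj : Function.Injective h := by
    intro x y hxy
    induction x using Fin.cases with
    | zero =>
      induction y using Fin.cases with
      | zero => rfl
      | succ j =>
        exfalso
        simp only [hh, Fin.cases_zero, Fin.cases_succ] at hxy
        exact (Fin.castSucc_lt_last (π' j)).ne' hxy
    | succ i =>
      induction y using Fin.cases with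
      | zero =>
        exfalso
        simp only [hh, Fin.cases_zero, Fin.cases_succ] at hxy
        exact (Fin.castSucc_lt_last (π' i)).ne hxy
      | succ j =>
        simp only [hh, Fin.cases_succ] at hxy
        have := π'.injective (Fin.castSucc_injective n hxy)
        rw [this]
  set e : Equiv.Perm (Fin (n+1)) :=
    Equiv.ofBijective h (Finite.injective_iff_bijective.mp hinj) with he
  have heval : ∀ t, e t = h t := fun t => rfl
  refine ⟨(Equiv.subRight k₀).trans e, ?_, ?_⟩
  · show e (k₀ - k₀) = Fin.last n
    rw [sub_self, heval]
    simp [hh]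
  · intro j
    show ((e (k₀ + ((((j : ℕ) + 1 : ℕ)) : Fin (n + 1)) - k₀)) : ℕ) = (π' j : ℕ)
    rw [add_sub_cancel_left, heval]
    have hcast : ((((j : ℕ) + 1 : ℕ)) : Fin (n + 1)) = Fin.succ j := by
      apply Fin.ext
      simp only [Fin.val_natCast, Fin.val_succ]
      exact Nat.mod_eq_of_lt (by omega)
    rw [hcast]
    simp [hh]

lemma tour_decomp (m n q : ℕ) (A : Fin m → Fin n → Bool) (p : ℕ)
    (C : Fin q → Finset (Fin n)) (σ : Equiv.Perm (Fin (n+1))) (k₀ : Fin (n+1))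
    (hk : σ k₀ = Fin.last n) (π : Equiv.Perm (Fin n))
    (hπ : ∀ j : Fin n, ((σ (k₀ + ((((j : ℕ) + 1 : ℕ)) : Fin (n + 1)))) : ℕ) = (π j : ℕ)) :
    ∑ k : Fin (n+1), pDist A p q C (σ k) (σ (k+1))
      = 2 * cons1 (fun i j => A i (π j))
        + (2*p+1) * ∑ k : Fin q, (2 * cons1Row n (fun j => decide (π j ∈ C k))) := by
  classical
  have hre : ∑ k : Fin (n+1), pDist A p q C (σ k) (σ (k+1))
      = ∑ t : Fin (n+1), pDist A p q C (σ (k₀ + t)) (σ (k₀ + (t+1))) := by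
    refine (Fintype.sum_equiv (Equiv.addLeft k₀)
      (fun t => pDist A p q C (σ (k₀ + t)) (σ (k₀ + (t+1))))
      (fun k => pDist A p q C (σ k) (σ (k+1))) (fun t => ?_)).symm
    simp only [Equiv.coe_addLeft]
    rw [add_assoc]
  have hcol : ∀ a b : Fin (n+1), colHam (appendZero A) a b
      = ∑ i : Fin m, if appendZero A i a = appendZero A i b then 0 else 1 := by
    intro a b
    rw [colHam]
    unfold hammingDist
    rw [Finset.card_filter]
    refine Finset.sum_congr rfl (fun i _ => ?_)
    by_cases h : appendZero A i a = appendZero A i b <;> simp [h]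
  have hham : ∀ i : Fin m,
      (∑ t : Fin (n+1), if appendZero A i (σ (k₀+t)) = appendZero A i (σ (k₀+(t+1))) then 0 else 1)
        = 2 * cons1Row n (fun j => A i (π j)) := by
    intro i
    apply cyclic_lemma n (fun t => appendZero A i (σ (k₀ + t)))
    · rw [add_zero, hk]
      simp [appendZero]
    · intro j
      have hv := hπ j
      have hlt : ((σ (k₀ + ((((j : ℕ) + 1 : ℕ)) : Fin (n + 1)))) : ℕ) < n := by
        rw [hv]; exact (π j).isLt
      simp only [appendZero]
      rw [dif_pos hlt]
      exact congrArg (A i) (Fin.ext hv.symm)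
  have hpen : ∀ k : Fin q,
      (∑ t : Fin (n+1), if (σ (k₀+t) ∈ (C k).image Fin.castSucc ↔
          σ (k₀+(t+1)) ∈ (C k).image Fin.castSucc) then 0 else 1)
        = 2 * cons1Row n (fun j => decide (π j ∈ C k)) := by
    intro k
    have hconv : ∀ t : Fin (n+1),
        (if (σ (k₀+t) ∈ (C k).image Fin.castSucc ↔
            σ (k₀+(t+1)) ∈ (C k).image Fin.castSucc) then (0:ℕ) else 1)
          = (if (decide (σ (k₀+t) ∈ (C k).image Fin.castSucc)
              = decide (σ (k₀+(t+1)) ∈ (C k).image Fin.castSucc)) then 0 else 1) := by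
      intro t
      by_cases h : (σ (k₀+t) ∈ (C k).image Fin.castSucc ↔
          σ (k₀+(t+1)) ∈ (C k).image Fin.castSucc)
      · rw [if_pos h, if_pos (decide_eq_decide.mpr h)]
      · rw [if_neg h, if_neg (fun hc => h (decide_eq_decide.mp hc))]
    rw [Finset.sum_congr rfl (fun t _ => hconv t)]
    apply cyclic_lemma n (fun t => decide (σ (k₀+t) ∈ (C k).image Fin.castSucc))
    · simp only [add_zero, hk, decide_eq_false_iff_not, Finset.mem_image]
      rintro ⟨x, hx, hcast⟩
      exact (Fin.castSucc_lt_last x).ne hcast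
    · intro j
      have hv := hπ j
      have heq : σ (k₀ + ((((j : ℕ) + 1 : ℕ)) : Fin (n + 1))) = Fin.castSucc (π j) :=
        Fin.ext (by rw [hv, Fin.coe_castSucc])
      rw [heq]
      apply decide_eq_decide.mpr
      constructor
      · intro h; exact Finset.mem_image_of_mem _ h
      · intro h
        obtain ⟨x, hx, hcast⟩ := Finset.mem_image.mp h
        rwa [← Fin.castSucc_injective n hcast]
  rw [hre]
  have hexp : ∀ t : Fin (n+1), pDist A p q C (σ (k₀+t)) (σ (k₀+(t+1)))
      = (∑ i : Fin m, if appendZero A i (σ (k₀+t)) = appendZero A i (σ (k₀+(t+1))) then 0 else 1)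
        + (2*p+1) * ∑ k : Fin q, (if (σ (k₀+t) ∈ (C k).image Fin.castSucc ↔
            σ (k₀+(t+1)) ∈ (C k).image Fin.castSucc) then 0 else 1) := by
    intro t
    rw [pDist, hcol]
  rw [Finset.sum_congr rfl (fun t _ => hexp t), Finset.sum_add_distrib]
  congr 1
  · rw [Finset.sum_comm, cons1, Finset.mul_sum]
    exact Finset.sum_congr rfl (fun i _ => hham i)
  · rw [← Finset.mul_sum]
    congr 1
    rw [Finset.sum_comm]
    exact Finset.sum_congr rfl (fun k _ => hpen k)

theorem stmt10 (m n q : ℕ) (A : Fin m → Fin n → Bool)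
    (p : ℕ) (hp : p = ∑ i, (Finset.univ.filter (fun j => A i j = true)).card)
    (C : Fin q → Finset (Fin n)) (hCne : ∀ k, (C k).Nonempty)
    (hfeas : ∃ π₀ : Equiv.Perm (Fin n), ∀ k, consecIn π₀ (C k))
    (σ : Equiv.Perm (Fin (n + 1)))
    (hmin : ∀ σ' : Equiv.Perm (Fin (n + 1)),
      ∑ k : Fin (n + 1), pDist A p q C (σ k) (σ (k + 1)) ≤
        ∑ k : Fin (n + 1), pDist A p q C (σ' k) (σ' (k + 1)))
    (k₀ : Fin (n + 1)) (hk : σ k₀ = Fin.last n)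
    (π : Equiv.Perm (Fin n))
    (hπ : ∀ j : Fin n, ((σ (k₀ + (Fin.ofNat (n + 1) ((j : ℕ) + 1 : ℕ)))) : ℕ) = (π j : ℕ)) :
    (∀ k, consecIn π (C k)) ∧
      (∀ π' : Equiv.Perm (Fin n), (∀ k, consecIn π' (C k)) →
        cons1 (fun i j => A i (π j)) ≤ cons1 (fun i j => A i (π' j))) := by
  classical
  obtain ⟨π₀, hπ₀⟩ := hfeas
  obtain ⟨σ₀, hσ₀k, hσ₀⟩ := exists_tour n k₀ π₀
  have hd := tour_decomp m n q A p C σ k₀ hk π hπ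
  have hd₀ := tour_decomp m n q A p C σ₀ k₀ hσ₀k π₀ hσ₀
  -- each feasible permutation has block count 1 for each C k
  have hB₀ : ∀ k, cons1Row n (fun j => decide (π₀ j ∈ C k)) = 1 :=
    fun k => (blocks_one_iff_consec n π₀ (C k) (hCne k)).mpr (hπ₀ k)
  have hsum₀ : ∑ k : Fin q, (2 * cons1Row n (fun j => decide (π₀ j ∈ C k))) = 2 * q := by
    rw [Finset.sum_congr rfl (fun k _ => by rw [hB₀ k, mul_one])]
    simp [mul_comm]
  rw [hsum₀] at hd₀
  -- cons1 is at most p for any permuted matrix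
  have hcons_le : ∀ π'' : Equiv.Perm (Fin n), cons1 (fun i j => A i (π'' j)) ≤ p := by
    intro π''
    rw [hp, cons1]
    apply Finset.sum_le_sum
    intro i _
    calc cons1Row n (fun j => A i (π'' j))
        ≤ (Finset.univ.filter (fun j => A i (π'' j) = true)).card := cons1Row_le n _
      _ = (Finset.univ.filter (fun j => A i j = true)).card := by
          rw [Finset.card_filter, Finset.card_filter]
          exact Equiv.sum_comp π'' (fun j => if A i j = true then 1 else 0)
  have hBk1 : ∀ k, 1 ≤ cons1Row n (fun j => decide (π j ∈ C k)) := by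
    intro k
    obtain ⟨x, hx⟩ := hCne k
    exact blocks_pos n _ ⟨π.symm x, by simp [hx]⟩
  set s := ∑ k : Fin q, cons1Row n (fun j => decide (π j ∈ C k)) with hs
  have hsum : ∑ k : Fin q, (2 * cons1Row n (fun j => decide (π j ∈ C k))) = 2 * s := by
    rw [hs, Finset.mul_sum]
  rw [hsum] at hd
  have hqs : q ≤ s := by
    rw [hs]
    calc q = ∑ _k : Fin q, 1 := by simp
      _ ≤ _ := Finset.sum_le_sum (fun k _ => hBk1 k)
  have hmin₀ := hmin σ₀
  rw [hd, hd₀] at hmin₀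
  have hc₀ := hcons_le π₀
  -- show s ≤ q
  have hsq : s ≤ q := by
    by_contra hs'
    push_neg at hs'
    have hmono : (2*p+1)*(2*(q+1)) ≤ (2*p+1)*(2*s) :=
      Nat.mul_le_mul_left _ (by omega)
    have hexpand : (2*p+1)*(2*(q+1)) = (2*p+1)*(2*q) + (4*p+2) := by ring
    rw [hexpand] at hmono
    obtain ⟨X, hX⟩ : ∃ X, (2*p+1)*(2*q) = X := ⟨_, rfl⟩
    obtain ⟨Y, hY⟩ : ∃ Y, (2*p+1)*(2*s) = Y := ⟨_, rfl⟩
    rw [hX, hY] at hmin₀ hmono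
    omega
  have hseq : s = q := le_antisymm hsq hqs
  have hBall : ∀ k, cons1Row n (fun j => decide (π j ∈ C k)) = 1 := by
    intro k
    by_contra hne1
    have h2le : 2 ≤ cons1Row n (fun j => decide (π j ∈ C k)) := by
      have := hBk1 k; omega
    have hlt : ∑ _k : Fin q, 1 < s :=
      Finset.sum_lt_sum (fun i _ => hBk1 i) ⟨k, Finset.mem_univ k, by omega⟩
    simp at hlt
    omega
  have hsum2q : 2 * s = 2 * q := by omega
  rw [hsum2q] at hd
  constructor
  · exact fun k => (blocks_one_iff_consec n π (C k) (hCne k)).mp (hBall k)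
  · intro π' hπ'
    obtain ⟨σ', hσ'k, hσ'j⟩ := exists_tour n k₀ π'
    have hd' := tour_decomp m n q A p C σ' k₀ hσ'k π' hσ'j
    have hB' : ∀ k, cons1Row n (fun j => decide (π' j ∈ C k)) = 1 :=
      fun k => (blocks_one_iff_consec n π' (C k) (hCne k)).mpr (hπ' k)
    have hsum' : ∑ k : Fin q, (2 * cons1Row n (fun j => decide (π' j ∈ C k))) = 2 * q := by
      rw [Finset.sum_congr rfl (fun k _ => by rw [hB' k, mul_one])]
      simp [mul_comm]
    rw [hsum'] at hd'
    have hmin' := hmin σ'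
    rw [hd, hd'] at hmin'
    obtain ⟨X, hX⟩ : ∃ X, (2*p+1)*(2*q) = X := ⟨_, rfl⟩
    rw [hX] at hmin'
    omega
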